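/- arXiv:2303.07211 — 5 statements merged into one kernel-verified Lean document; each statement's English description precedes it below -/
import Mathlib

section
/- For positive integers c ≤ a ≤ b, one has C(a,c)/C(b,c) ≤ ((a - (c-1)/2)/(b - (c-1)/2))^c. -/
theorem binom_ratio_bound (a b c : ℕ) (hc : 0 < c) (hca : c ≤ a) (hab : a ≤ b) :
    (a.choose c : ℝ) / (b.choose c : ℝ) ≤
      (((a : ℝ) - ((c : ℝ) - 1) / 2) / ((b : ℝ) - ((c : ℝ) - 1) / 2)) ^ c := by
  set m : ℝ := ((c : ℝ) - 1) / 2 with hm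
  have hc1 : (1 : ℝ) ≤ (c : ℝ) := by exact_mod_cast hc
  have hcaR : (c : ℝ) ≤ (a : ℝ) := by exact_mod_cast hca
  have habR : (a : ℝ) ≤ (b : ℝ) := by exact_mod_cast hab
  have hA : 0 < (a : ℝ) - m := by rw [hm]; linarith
  have hB : 0 < (b : ℝ) - m := by rw [hm]; linarith
  set P : ℕ → ℝ := fun n => ∏ i ∈ Finset.range c, ((n : ℝ) - i) with hP
  -- cast descFactorial
  have hcast : ∀ n : ℕ, c ≤ n → (n.descFactorial c : ℝ) = P n := by
    intro n hn
    rw [Nat.descFactorial_eq_prod_range, hP]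
    push_cast
    refine Finset.prod_congr rfl fun i hi => ?_
    have hi' : i ≤ n := le_trans (le_of_lt (Finset.mem_range.mp hi)) hn
    push_cast [hi']
    ring
  have hPpos : ∀ n : ℕ, c ≤ n → 0 < P n := by
    intro n hn
    apply Finset.prod_pos
    intro i hi
    have : (i : ℝ) < (c : ℝ) := by exact_mod_cast Finset.mem_range.mp hi
    have : (c : ℝ) ≤ n := by exact_mod_cast hn
    linarith [show (i : ℝ) < (c : ℝ) from by exact_mod_cast Finset.mem_range.mp hi]
  have hchoose : ∀ n : ℕ, c ≤ n → (n.choose c : ℝ) = P n / (c.factorial : ℝ) := by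
    intro n hn
    have := Nat.descFactorial_eq_factorial_mul_choose n c
    have h2 : (n.descFactorial c : ℝ) = (c.factorial : ℝ) * (n.choose c : ℝ) := by
      exact_mod_cast congrArg (Nat.cast : ℕ → ℝ) this
    rw [hcast n hn] at h2
    field_simp [Nat.factorial_ne_zero] at h2 ⊢
    linarith [h2]
  rw [hchoose a hca, hchoose b (le_trans hca hab)]
  have hfac : (0 : ℝ) < (c.factorial : ℝ) := by exact_mod_cast c.factorial_pos
  have hred : P a / (c.factorial : ℝ) / (P b / (c.factorial : ℝ)) = P a / P b := by
    rw [div_div_div_comm, div_self hfac.ne', div_one]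
  rw [hred, div_pow, div_le_div_iff₀ (hPpos b (le_trans hca hab)) (pow_pos hB c)]
  -- key squared inequality
  have key : ∀ i ∈ Finset.range c,
      (((a : ℝ) - i) * ((a : ℝ) - (c - 1 - i : ℕ))) * ((b : ℝ) - m) ^ 2 ≤
      (((b : ℝ) - i) * ((b : ℝ) - (c - 1 - i : ℕ))) * ((a : ℝ) - m) ^ 2 := by
    intro i hi
    have hi' : i < c := Finset.mem_range.mp hi
    have hi1 : i ≤ c - 1 := Nat.le_sub_one_of_lt hi'
    have hcc : ((c - 1 - i : ℕ) : ℝ) = (c : ℝ) - 1 - i := by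
      have h1 : 1 ≤ c := hc
      push_cast [Nat.sub_sub, Nat.cast_sub (by omega : 1 + i ≤ c)]
      ring
    rw [hcc]
    set A := (a : ℝ) - m
    set B := (b : ℝ) - m
    set d := m - (i : ℝ) with hd
    have e1 : (a : ℝ) - i = A + d := by rw [hd]; ring
    have e2 : (a : ℝ) - ((c : ℝ) - 1 - i) = A - d := by rw [hd, hm]; ring
    have e3 : (b : ℝ) - i = B + d := by rw [hd]; ring
    have e4 : (b : ℝ) - ((c : ℝ) - 1 - i) = B - d := by rw [hd, hm]; ring
    rw [e1, e2, e3, e4]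
    have hAB : A ≤ B := by simp only [A, B]; linarith
    nlinarith [mul_nonneg (mul_nonneg (sq_nonneg d) (sub_nonneg.2 hAB)) (by linarith : (0:ℝ) ≤ A + B)]
  have hnonneg : ∀ i ∈ Finset.range c,
      0 ≤ (((a : ℝ) - i) * ((a : ℝ) - (c - 1 - i : ℕ))) * ((b : ℝ) - m) ^ 2 := by
    intro i hi
    have hi' : i < c := Finset.mem_range.mp hi
    have h1 : (0 : ℝ) ≤ (a : ℝ) - i := by
      have : (i : ℝ) < c := by exact_mod_cast hi'
      linarith
    have h2 : (0 : ℝ) ≤ (a : ℝ) - (c - 1 - i : ℕ) := by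
      have : (c - 1 - i : ℕ) < c := by omega
      have : ((c - 1 - i : ℕ) : ℝ) < c := by exact_mod_cast this
      linarith
    positivity
  have hprod := Finset.prod_le_prod hnonneg key
  have reflA : ∏ i ∈ Finset.range c, ((a : ℝ) - (c - 1 - i : ℕ)) = P a := by
    rw [hP]
    exact Finset.prod_range_reflect (fun j => (a : ℝ) - j) c
  have reflB : ∏ i ∈ Finset.range c, ((b : ℝ) - (c - 1 - i : ℕ)) = P b := by
    rw [hP]
    exact Finset.prod_range_reflect (fun j => (b : ℝ) - j) c
  rw [Finset.prod_mul_distrib, Finset.prod_mul_distrib, Finset.prod_mul_distrib,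
    Finset.prod_mul_distrib, Finset.prod_const, Finset.prod_const, reflA, reflB,
    Finset.card_range] at hprod
  -- hprod : P a * P a * ((b-m)^2)^c ≤ P b * P b * ((a-m)^2)^c
  have hx : 0 ≤ P a * ((b : ℝ) - m) ^ c := by
    exact mul_nonneg (hPpos a hca).le (pow_nonneg hB.le c)
  have hy : 0 ≤ ((a : ℝ) - m) ^ c * P b := by
    exact mul_nonneg (pow_nonneg hA.le c) (hPpos b (le_trans hca hab)).le
  have hsq : (P a * ((b : ℝ) - m) ^ c) ^ 2 ≤ (((a : ℝ) - m) ^ c * P b) ^ 2 := by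
    have h1 : (P a * ((b : ℝ) - m) ^ c) ^ 2 = P a * P a * (((b : ℝ) - m) ^ 2) ^ c := by
      rw [mul_pow, ← pow_mul, ← pow_mul, Nat.mul_comm]; ring
    have h2 : (((a : ℝ) - m) ^ c * P b) ^ 2 = P b * P b * (((a : ℝ) - m) ^ 2) ^ c := by
      rw [mul_pow, ← pow_mul, ← pow_mul, Nat.mul_comm]; ring
    rw [h1, h2]
    calc P a * P a * (((b:ℝ) - m) ^ 2) ^ c = (∏ x ∈ Finset.range c, ((a:ℝ) - x)) * P a * (((b:ℝ) - m) ^ 2) ^ c := by rw [hP]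
      _ ≤ (∏ x ∈ Finset.range c, ((b:ℝ) - x)) * P b * (((a:ℝ) - m) ^ 2) ^ c := hprod
      _ = P b * P b * (((a:ℝ) - m) ^ 2) ^ c := by rw [hP]
  exact (pow_le_pow_iff_left₀ hx hy (by norm_num)).mp hsq
end

section
/- If C is a q-ary (k,n)-frameproof code of length t, then the 2t × n matrix obtained by stacking C on top of its complement C̄ (where each entry s is replaced by q-1-s) is a q-ary (k+1,n)-strongly selective code. Consequently t_SS(q,k+1,n) ≤ 2·t_FP(q,k,n). -/
/-- Frameproof property for a matrix with rows indexed by an arbitrary type `ι`. -/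
def IsFrameproof (q k n : ℕ) {ι : Type*} (M : ι → Fin n → ℕ) : Prop :=
  (∀ i j, M i j < q) ∧
  ∀ c : Fin n, ∀ S : Finset (Fin n), S.card = k → c ∉ S →
    ∃ i : ι, ∀ j ∈ S, M i j ≠ M i c

/-- Strongly selective property for a matrix with rows indexed by `ι`. -/
def IsStronglySelective (q k n : ℕ) {ι : Type*} (M : ι → Fin n → ℕ) : Prop :=
  (∀ i j, M i j < q) ∧
  ∀ S : Finset (Fin n), S.card = k → ∀ c ∈ S,
    ∃ i : ι, M i c ≠ 0 ∧ ∀ j ∈ S, j ≠ c → M i j ≠ M i c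

lemma fp_to_ss (q k n : ℕ) (hq : 2 ≤ q) {ι : Type*} (M : ι → Fin n → ℕ)
    (hM : IsFrameproof q k n M) :
    IsStronglySelective q (k + 1) n
      (Sum.elim M (fun i j => q - 1 - M i j) : ι ⊕ ι → Fin n → ℕ) := by
  obtain ⟨hb, hfp⟩ := hM
  constructor
  · rintro (i | i) j
    · exact hb i j
    · simp only [Sum.elim_inr]
      omega
  · intro S hS c hc
    obtain ⟨i, hi⟩ := hfp c (S.erase c) (by rw [Finset.card_erase_of_mem hc, hS]; rfl)
      (Finset.notMem_erase c S)
    by_cases h0 : M i c = 0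
    · refine ⟨Sum.inr i, ?_, ?_⟩
      · simp only [Sum.elim_inr]; omega
      · intro j hj hjc
        have := hi j (Finset.mem_erase.mpr ⟨hjc, hj⟩)
        have := hb i j
        have := hb i c
        simp only [Sum.elim_inr]
        omega
    · refine ⟨Sum.inl i, h0, ?_⟩
      intro j hj hjc
      exact hi j (Finset.mem_erase.mpr ⟨hjc, hj⟩)

lemma ss_reindex (q k n : ℕ) {ι ι' : Type*} (e : ι' ≃ ι) (M : ι → Fin n → ℕ)
    (hM : IsStronglySelective q k n M) : IsStronglySelective q k n (M ∘ e) := by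
  obtain ⟨hb, hss⟩ := hM
  refine ⟨fun i j => hb _ j, fun S hS c hc => ?_⟩
  obtain ⟨i, hi1, hi2⟩ := hss S hS c hc
  exact ⟨e.symm i, by simpa using hi1, by simpa using hi2⟩

theorem fp_stack_complement_ss (q k n t : ℕ) (hq : 2 ≤ q) (hk : 0 < k) (hn : k < n)
    (M : Fin t → Fin n → ℕ) (hM : IsFrameproof q k n M) :
    IsStronglySelective q (k + 1) n
      (Sum.elim M (fun i j => q - 1 - M i j) : Fin t ⊕ Fin t → Fin n → ℕ) ∧
    ({t' | ∃ M' : Fin t' → Fin n → ℕ, IsStronglySelective q (k + 1) n M'}.Nonempty ∧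
      sInf {t' | ∃ M' : Fin t' → Fin n → ℕ, IsStronglySelective q (k + 1) n M'} ≤
        2 * sInf {t' | ∃ M' : Fin t' → Fin n → ℕ, IsFrameproof q k n M'}) := by
  have key : ∀ s : ℕ, ∀ N : Fin s → Fin n → ℕ, IsFrameproof q k n N →
      (2 * s) ∈ {t' | ∃ M' : Fin t' → Fin n → ℕ, IsStronglySelective q (k + 1) n M'} := by
    intro s N hN
    have hss := fp_to_ss q k n hq N hN
    have e : Fin (2 * s) ≃ Fin s ⊕ Fin s :=
      (finCongr (two_mul s)).trans finSumFinEquiv.symm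
    exact ⟨_, ss_reindex q (k + 1) n e _ hss⟩
  have hfpne : {t' | ∃ M' : Fin t' → Fin n → ℕ, IsFrameproof q k n M'}.Nonempty :=
    ⟨t, M, hM⟩
  have hmem := Nat.sInf_mem hfpne
  obtain ⟨N, hN⟩ := hmem
  have h2 := key _ N hN
  exact ⟨fp_to_ss q k n hq M hM, ⟨_, h2⟩, Nat.sInf_le h2⟩
end

section
/- Let M be a q-ary t×n matrix in which every column has exactly w nonzero entries and any two distinct columns agree on a common nonzero symbol in at most λ = ⌊(w-1)/(k-1)⌋ rows. Then M is a q-ary (k,w,n)-strongly selective code: for any column c and any k-1 other columns, there is a row where c has a nonzero entry s and none of the k-1 other columns has entry s in that row. -/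
theorem lambda_matrix_is_strongly_selective (q k n t w : ℕ)
    (hq : 2 ≤ q) (hk : 2 ≤ k) (hw : 1 ≤ w)
    (M : Fin t → Fin n → ℕ)
    (hrange : ∀ i j, M i j < q)
    (hweight : ∀ c : Fin n,
      (Finset.univ.filter (fun i : Fin t => M i c ≠ 0)).card = w)
    (hpair : ∀ c d : Fin n, c ≠ d →
      (Finset.univ.filter (fun i : Fin t => M i c ≠ 0 ∧ M i c = M i d)).card ≤
        (w - 1) / (k - 1)) :
    ∀ c : Fin n, ∀ S : Finset (Fin n), S.card = k - 1 → c ∉ S →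
      ∃ i : Fin t, M i c ≠ 0 ∧ ∀ j ∈ S, M i j ≠ M i c := by
  intro c S hS hcS
  by_contra h
  push_neg at h
  have hsub : (Finset.univ.filter (fun i : Fin t => M i c ≠ 0)) ⊆
      S.biUnion (fun d => Finset.univ.filter
        (fun i : Fin t => M i c ≠ 0 ∧ M i c = M i d)) := by
    intro i hi
    simp only [Finset.mem_filter, Finset.mem_univ, true_and] at hi
    obtain ⟨j, hj, hje⟩ := h i hi
    exact Finset.mem_biUnion.2 ⟨j, hj, by
      simp only [Finset.mem_filter, Finset.mem_univ, true_and]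
      exact ⟨hi, hje.symm⟩⟩
  have hcard := Finset.card_le_card hsub
  rw [hweight c] at hcard
  have hle : (S.biUnion (fun d => Finset.univ.filter
      (fun i : Fin t => M i c ≠ 0 ∧ M i c = M i d))).card ≤
      (k - 1) * ((w - 1) / (k - 1)) := by
    calc _ ≤ ∑ d ∈ S, (Finset.univ.filter
          (fun i : Fin t => M i c ≠ 0 ∧ M i c = M i d)).card :=
            Finset.card_biUnion_le
      _ ≤ ∑ _d ∈ S, (w - 1) / (k - 1) := by
          apply Finset.sum_le_sum
          intro d hd
          exact hpair c d (fun hcd => hcS (hcd ▸ hd))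
      _ = (k - 1) * ((w - 1) / (k - 1)) := by rw [Finset.sum_const, hS, smul_eq_mul]
  have hmd : (k - 1) * ((w - 1) / (k - 1)) ≤ w - 1 := Nat.mul_div_le _ _
  omega
end

section
/- For every integer k ≥ 2, the inequality ((k+1)/k)^k · (k+1)/k! < (k!/(k!-1))^k holds. -/
private lemma fac_lb (n : ℕ) : 3 * (n + 5) ≤ (n + 4).factorial := by
  induction n with
  | zero => decide
  | succ m ih =>
    have h : (m + 1 + 4).factorial = (m + 5) * (m + 4).factorial := by
      show (m + 5).factorial = _
      rw [Nat.factorial_succ]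
    rw [h]
    have h2 : 2 * (m + 4).factorial ≤ (m + 5) * (m + 4).factorial :=
      Nat.mul_le_mul_right _ (by omega)
    omega

private lemma pow_lt_three (k : ℕ) (hk : 1 ≤ k) : (((k : ℝ) + 1) / k) ^ k < 3 := by
  have hk0 : (0 : ℝ) < k := by exact_mod_cast Nat.pos_of_ne_zero (by omega)
  have h1 : ((k : ℝ) + 1) / k = 1 + 1 / k := by field_simp
  have h2 : (1 : ℝ) + 1 / k ≤ Real.exp (1 / k) := by
    have := Real.add_one_le_exp (1 / (k : ℝ)); linarith
  have h3 : ((1 : ℝ) + 1 / k) ^ k ≤ (Real.exp (1 / k)) ^ k :=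
    pow_le_pow_left₀ (by positivity) h2 k
  have h4 : (Real.exp (1 / (k : ℝ))) ^ k = Real.exp 1 := by
    rw [← Real.exp_nat_mul]
    congr 1
    field_simp
  have h5 := Real.exp_one_lt_d9
  rw [h1]
  calc ((1 : ℝ) + 1 / k) ^ k ≤ Real.exp 1 := by rw [← h4]; exact h3
    _ < 3 := by linarith

theorem expurgation_beats_stinson (k : ℕ) (hk : 2 ≤ k) :
    (((k : ℝ) + 1) / k) ^ k * ((k : ℝ) + 1) / (Nat.factorial k) <
      ((Nat.factorial k : ℝ) / ((Nat.factorial k : ℝ) - 1)) ^ k := by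
  obtain rfl | rfl | ⟨n, rfl⟩ : k = 2 ∨ k = 3 ∨ ∃ n, k = n + 4 := by
    rcases k with _ | _ | _ | _ | n
    · omega
    · omega
    · exact Or.inl rfl
    · exact Or.inr (Or.inl rfl)
    · exact Or.inr (Or.inr ⟨n, rfl⟩)
  · norm_num [Nat.factorial]
  · norm_num [Nat.factorial]
  · have hfac := fac_lb n
    have hF : (3 : ℝ) * (n + 5) ≤ ((n + 4).factorial : ℝ) := by exact_mod_cast hfac
    have hF0 : (0 : ℝ) < ((n + 4).factorial : ℝ) := by positivity
    have hP := pow_lt_three (n + 4) (by omega)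
    have hk1 : (0 : ℝ) < ((n + 4 : ℕ) : ℝ) + 1 := by positivity
    have lhs_lt : ((((n + 4 : ℕ) : ℝ) + 1) / ((n + 4 : ℕ) : ℝ)) ^ (n + 4) * (((n + 4 : ℕ) : ℝ) + 1) / ((n + 4).factorial : ℝ)
        < 3 * (((n + 4 : ℕ) : ℝ) + 1) / ((n + 4).factorial : ℝ) := by
      gcongr
    have mid : (3 : ℝ) * (((n + 4 : ℕ) : ℝ) + 1) / ((n + 4).factorial : ℝ) ≤ 1 := by
      rw [div_le_one hF0]
      push_cast
      push_cast at hF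
      linarith
    have rhs : (1 : ℝ) < (((n + 4).factorial : ℝ) / (((n + 4).factorial : ℝ) - 1)) ^ (n + 4) := by
      have hF2 : (15 : ℝ) ≤ ((n + 4).factorial : ℝ) := by push_cast at hF ⊢; linarith
      have hb : (1 : ℝ) < ((n + 4).factorial : ℝ) / (((n + 4).factorial : ℝ) - 1) := by
        rw [lt_div_iff₀ (by linarith)]
        linarith
      exact one_lt_pow₀ hb (by omega)
    calc ((((n + 4 : ℕ) : ℝ) + 1) / ((n + 4 : ℕ) : ℝ)) ^ (n + 4) * (((n + 4 : ℕ) : ℝ) + 1) / ((n + 4).factorial : ℝ)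
        < 3 * (((n + 4 : ℕ) : ℝ) + 1) / ((n + 4).factorial : ℝ) := lhs_lt
      _ ≤ 1 := mid
      _ < _ := rhs
end

section
/- For every integer k ≥ 2, the inequality ((k+1)/k)^k · (k+1)/k! < 2^{k+1} holds. -/
theorem expurgation_beats_shangguan (k : ℕ) (hk : 2 ≤ k) :
    (((k : ℝ) + 1) / k) ^ k * ((k : ℝ) + 1) / (Nat.factorial k) < 2 ^ (k + 1) := by
  have hk2 : (2:ℝ) ≤ (k:ℝ) := by exact_mod_cast hk
  have hk0 : (0:ℝ) < k := by linarith
  have h1 : ((k:ℝ)+1)/k ≤ 2 := by rw [div_le_iff₀ hk0]; linarith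
  have h2 : (0:ℝ) ≤ ((k:ℝ)+1)/k := by positivity
  have hpow : (((k:ℝ)+1)/k)^k ≤ 2^k := pow_le_pow_left₀ h2 h1 k
  have hfk : (k:ℝ) ≤ (Nat.factorial k : ℝ) := by exact_mod_cast Nat.self_le_factorial k
  have hfact : (0:ℝ) < (Nat.factorial k : ℝ) := by positivity
  have h3 : ((k:ℝ)+1)/(Nat.factorial k) < 2 := by
    rw [div_lt_iff₀ hfact]; linarith
  have h3nn : (0:ℝ) ≤ ((k:ℝ)+1)/(Nat.factorial k) := by positivity
  calc (((k : ℝ) + 1) / k) ^ k * ((k : ℝ) + 1) / (Nat.factorial k)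
      = (((k : ℝ) + 1) / k) ^ k * (((k : ℝ) + 1) / (Nat.factorial k)) := by ring
    _ < 2^k * 2 := by
        apply mul_lt_mul' hpow h3 h3nn (by positivity)
    _ = 2^(k+1) := by rw [pow_succ]
end
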